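/- Let X be a Banach space whose dual X* has Rademacher type p > 1 with type constant T_p. Then for every normalized weakly null basic sequence (y_n) in X there exist a subsequence (y_{n_k}) and a bounded sequence (g_k) in X* biorthogonal to (y_{n_k}) such that (g_k) is weakly null. -/

import Mathlib

open Filter Topology Finset

/-- `E` has Rademacher type `p` with constant `T`: the average over all choices of signs
of `‖∑ ±x_i‖` is at most `T (∑ ‖x_i‖^p)^{1/p}`. -/
def HasTypeWithConstant (E : Type*) [NormedAddCommGroup E] [NormedSpace ℂ E]
    (p T : ℝ) : Prop :=
  ∀ (M : ℕ) (x : Fin M → E),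
    (1 / 2 ^ M : ℝ) *
        ∑ ε : Fin M → Bool, ‖∑ i, (if ε i then x i else -x i)‖ ≤
      T * (∑ i, ‖x i‖ ^ p) ^ (1 / p)


open scoped Classical

namespace RosGP

/-- Auxiliary: a strictly monotone `ℕ → ℕ` dominates the identity. -/
lemma sm_le {f : ℕ → ℕ} (hf : StrictMono f) (n : ℕ) : n ≤ f n := hf.le_apply

/-- If the range of strict mono `g` is inside the range of strict mono `f`, then `f ≤ g`. -/
lemma sm_range_le {f g : ℕ → ℕ} (hf : StrictMono f) (hg : StrictMono g)
    (h : ∀ k, g k ∈ Set.range f) (n : ℕ) : f n ≤ g n := by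
  classical
  choose σ hσ using h
  have hσm : StrictMono σ := by
    intro a b hab
    have := hg hab
    rw [← hσ a, ← hσ b] at this
    exact hf.lt_iff_lt.mp this
  calc f n ≤ f (σ n) := hf.monotone (sm_le hσm n)
    _ = g n := hσ n

lemma sorted_subset_sublist : ∀ (l s : List ℕ), s.Pairwise (· < ·) → l.Pairwise (· < ·) →
    (∀ a ∈ s, a ∈ l) → s.Sublist l := by
  intro l
  induction l with
  | nil =>
    intro s _ _ hsub
    cases s with
    | nil => exact List.Sublist.refl _
    | cons a s' => exact absurd (hsub a (by simp)) (by simp)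
  | cons b l ih =>
    intro s hs hl hsub
    cases s with
    | nil => exact List.nil_sublist _
    | cons a s' =>
      have hbl : ∀ c ∈ l, b < c := fun c hc => List.rel_of_pairwise_cons hl hc
      have has' : ∀ c ∈ s', a < c := fun c hc => List.rel_of_pairwise_cons hs hc
      by_cases hab : a = b
      · subst hab
        refine List.Sublist.cons₂ _ (ih s' hs.of_cons hl.of_cons ?_)
        intro c hc
        have : c ∈ a :: l := hsub c (List.mem_cons_of_mem _ hc)
        rcases List.mem_cons.mp this with h | h
        · exact absurd (h ▸ has' c hc) (lt_irrefl _)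
        · exact h
      · have hal : a ∈ l := by
          rcases List.mem_cons.mp (hsub a (by simp)) with h | h
          · exact absurd h hab
          · exact h
        refine List.Sublist.cons _ (ih (a :: s') hs hl.of_cons ?_)
        intro c hc
        rcases List.mem_cons.mp hc with h | h
        · exact h ▸ hal
        · have hcl : c ∈ b :: l := hsub c hc
          rcases List.mem_cons.mp hcl with h' | h'
          · exfalso
            have h1 : b < a := hbl a hal
            have h2 : a < c := has' c h
            omega
          · exact h'


section Core

variable (Q : ℕ → (ℕ → ℕ) → Prop)

/-- `g` is "bad" if some prefix-condition fails. -/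
def RBad (g : ℕ → ℕ) : Prop := ∃ n, ¬ Q n g

/-- Extend the finite list `s` by the sequence `h`. -/
def rext (s : List ℕ) (h : ℕ → ℕ) : ℕ → ℕ :=
  fun k => if k < s.length then s.getD k 0 else h (k - s.length)

/-- Every infinite extension of `s` inside the range of `f` is bad. -/
def raccepts (s : List ℕ) (f : ℕ → ℕ) : Prop :=
  ∀ h : ℕ → ℕ, StrictMono h → (∀ k, h k ∈ Set.range f) → (∀ a ∈ s, a < h 0) →
    RBad Q (rext s h)

/-- No subsequence of `f` accepts `s`. -/
def rrejects (s : List ℕ) (f : ℕ → ℕ) : Prop :=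
  ∀ f', StrictMono f' → (∀ k, f' k ∈ Set.range f) → ¬ raccepts Q s f'

variable {Q}

lemma raccepts_mono {s : List ℕ} {f f' : ℕ → ℕ} (hsub : ∀ k, f' k ∈ Set.range f)
    (h : raccepts Q s f) : raccepts Q s f' := by
  intro g hg hgr hgs
  refine h g hg (fun k => ?_) hgs
  obtain ⟨j, hj⟩ := hgr k
  obtain ⟨i, hi⟩ := hsub j
  exact ⟨i, by rw [hi, hj]⟩

lemma rrejects_mono {s : List ℕ} {f f' : ℕ → ℕ} (hsub : ∀ k, f' k ∈ Set.range f)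
    (h : rrejects Q s f) : rrejects Q s f' := by
  intro g hg hgr
  refine h g hg (fun k => ?_)
  obtain ⟨j, hj⟩ := hgr k
  obtain ⟨i, hi⟩ := hsub j
  exact ⟨i, by rw [hi, hj]⟩

lemma range_trans {f g h : ℕ → ℕ} (h1 : ∀ k, g k ∈ Set.range f)
    (h2 : ∀ k, h k ∈ Set.range g) : ∀ k, h k ∈ Set.range f := by
  intro k
  obtain ⟨j, hj⟩ := h2 k
  obtain ⟨i, hi⟩ := h1 j
  exact ⟨i, by rw [hi, hj]⟩

/-- Key rewrite: if `h 0 = m` then `rext s h = rext (s ++ [m]) (h ∘ succ)`. -/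
lemma rext_snoc (s : List ℕ) (m : ℕ) (h : ℕ → ℕ) (hm : h 0 = m) :
    rext s h = rext (s ++ [m]) (fun k => h (k + 1)) := by
  funext k
  simp only [rext, List.length_append, List.length_singleton]
  rcases lt_trichotomy k s.length with hk | hk | hk
  · rw [if_pos hk, if_pos (by omega), List.getD_append _ _ _ _ hk]
  · subst hk
    rw [if_neg (lt_irrefl _), if_pos (by omega),
      List.getD_append_right _ _ _ _ (le_refl _)]
    simp [hm]
  · rw [if_neg (by omega), if_neg (by omega)]
    congr 1
    omega

end Core


section Step

variable (Q : ℕ → (ℕ → ℕ) → Prop) (s : List ℕ)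

def PStep (M : ℕ → ℕ) : Prop :=
  ∃ N, StrictMono N ∧ (∀ k, N k ∈ Set.range (fun j => M (j + 1))) ∧
    raccepts Q (s ++ [M 0]) N

noncomputable def stepF (M : ℕ → ℕ) : ℕ → ℕ :=
  if h : PStep Q s M then h.choose else fun k => M (k + 1)

lemma stepF_sub (M : ℕ → ℕ) : ∀ k, stepF Q s M k ∈ Set.range (fun j => M (j + 1)) := by
  intro k
  unfold stepF
  split
  · next h => exact h.choose_spec.2.1 k
  · exact ⟨k, rfl⟩

lemma stepF_sm {M : ℕ → ℕ} (hM : StrictMono M) : StrictMono (stepF Q s M) := by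
  unfold stepF
  split
  · next h => exact h.choose_spec.1
  · exact fun a b hab => hM (by omega)

lemma stepF_acc {M : ℕ → ℕ} (h : PStep Q s M) :
    raccepts Q (s ++ [M 0]) (stepF Q s M) := by
  unfold stepF
  rw [dif_pos h]
  exact h.choose_spec.2.2

noncomputable def chainF (f : ℕ → ℕ) (B : ℕ) : ℕ → (ℕ → ℕ)
  | 0 => fun k => f (k + (B + 1))
  | i + 1 => stepF Q s (chainF f B i)

variable {f : ℕ → ℕ} {B : ℕ}

lemma chainF_sm (hf : StrictMono f) : ∀ i, StrictMono (chainF Q s f B i) := by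
  intro i
  induction i with
  | zero => exact fun a b hab => hf (by omega)
  | succ i ih => exact stepF_sm Q s ih

lemma chainF_succ_sub (i : ℕ) :
    ∀ k, chainF Q s f B (i + 1) k ∈ Set.range (fun j => chainF Q s f B i (j + 1)) :=
  stepF_sub Q s _

lemma chainF_sub (i : ℕ) : ∀ j, i ≤ j →
    ∀ k, chainF Q s f B j k ∈ Set.range (chainF Q s f B i) := by
  intro j hij
  induction j with
  | zero =>
    have : i = 0 := by omega
    subst this
    exact fun k => ⟨k, rfl⟩
  | succ j ih =>
    rcases Nat.lt_or_ge i (j + 1) with h | h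
    · intro k
      obtain ⟨m, hm⟩ := chainF_succ_sub Q s j k
      obtain ⟨i', hi'⟩ := ih (by omega) (m + 1)
      exact ⟨i', by rw [hi', ← hm]⟩
    · have : i = j + 1 := by omega
      subst this
      exact fun k => ⟨k, rfl⟩

lemma chainF_range (hf : StrictMono f) (i : ℕ) :
    ∀ k, chainF Q s f B i k ∈ Set.range f := by
  induction i with
  | zero => exact fun k => ⟨k + (B + 1), rfl⟩
  | succ i ih =>
    intro k
    obtain ⟨m, hm⟩ := chainF_succ_sub Q s i k
    obtain ⟨j, hj⟩ := ih (m + 1)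
    exact ⟨j, by rw [hj, ← hm]⟩

lemma chainF_gt (hf : StrictMono f) (i : ℕ) : ∀ k, B < chainF Q s f B i k := by
  induction i with
  | zero =>
    intro k
    have := sm_le hf (k + (B + 1))
    simp only [chainF]
    omega
  | succ i ih =>
    intro k
    obtain ⟨m, hm⟩ := chainF_succ_sub Q s (f := f) (B := B) i k
    have h2 := ih (m + 1)
    rw [← hm]
    exact h2

/-- The key "one-step" lemma: if `f` rejects `s`, there is a subsequence `f'` of `f`,
with entries `> B`, all of whose one-element extensions of `s` it rejects. -/
lemma step_lemma (hf : StrictMono f) (hrej : rrejects Q s f) (B : ℕ) :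
    ∃ f' : ℕ → ℕ, StrictMono f' ∧ (∀ k, f' k ∈ Set.range f) ∧ (∀ k, B < f' k) ∧
      ∀ m ∈ Set.range f', rrejects Q (s ++ [m]) f' := by
  classical
  set ch := chainF Q s f B with hch
  set msq := fun i => ch i 0 with hmsq
  have hchsm : ∀ i, StrictMono (ch i) := chainF_sm Q s hf
  have hmsm : StrictMono msq := by
    apply strictMono_nat_of_lt_succ
    intro i
    obtain ⟨m, hm⟩ := chainF_succ_sub Q s (f := f) (B := B) i 0
    rw [← hch] at hm
    show ch i 0 < ch (i + 1) 0
    rw [← hm]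
    exact (hchsm i) (by omega)
  have hchstep : ∀ i, ch (i + 1) = stepF Q s (ch i) := fun i => by rw [hch]; rfl
  have hchrange : ∀ i k, ch i k ∈ Set.range f := fun i => chainF_range Q s hf i
  have hsub2 : ∀ i l, i < l → ∀ k, ch l k ∈ Set.range (fun j => ch i (j + 1)) := by
    intro i l hil k
    obtain ⟨m, hm⟩ := chainF_sub Q s (f := f) (B := B) (i + 1) l hil k
    rw [← hch] at hm
    obtain ⟨m', hm'⟩ := chainF_succ_sub Q s (f := f) (B := B) i m
    rw [← hch] at hm'
    exact ⟨m', by rw [hm', hm]⟩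
  have hGoodInf : {i | ¬ PStep Q s (ch i)}.Infinite := by
    by_contra hfin
    rw [Set.not_infinite] at hfin
    obtain ⟨I, hI⟩ : ∃ I, ∀ i, I ≤ i → PStep Q s (ch i) := by
      rcases hfin.bddAbove with ⟨I, hI⟩
      refine ⟨I + 1, fun i hi => ?_⟩
      by_contra hcon
      have := hI (Set.mem_setOf.mpr hcon)
      omega
    set D := fun k => msq (I + k) with hD
    have hDsm : StrictMono D := fun a b hab => hmsm (by omega)
    have hDrange : ∀ k, D k ∈ Set.range f := fun k => hchrange _ 0
    have hacc : raccepts Q s D := by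
      intro h hSM hrange hgt
      obtain ⟨k0, hk0⟩ := hrange 0
      set j := I + k0 with hjdef
      have hj : h 0 = msq j := by rw [← hk0]
      have hacc' := stepF_acc Q s (hI j (by omega))
      rw [← hchstep] at hacc'
      have hmain : RBad Q (rext (s ++ [msq j]) (fun k => h (k + 1))) := by
        refine hacc' _ (fun a b hab => hSM (by omega)) ?_ ?_
        · intro k
          obtain ⟨k1, hk1⟩ := hrange (k + 1)
          have hgt1 : msq j < msq (I + k1) := by
            have : h 0 < h (k + 1) := hSM (by omega)
            rw [hj] at this
            calc msq j < h (k + 1) := this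
              _ = msq (I + k1) := by rw [← hk1]
          have hlt : j < I + k1 := hmsm.lt_iff_lt.mp hgt1
          obtain ⟨m', hm'⟩ := chainF_sub Q s (f := f) (B := B) (j + 1) (I + k1) (by omega) 0
          rw [← hch] at hm'
          refine ⟨m', ?_⟩
          have hDk1 : D k1 = ch (I + k1) 0 := rfl
          rw [hm', ← hk1, hDk1]
        · intro a ha
          show a < h (0 + 1)
          rcases List.mem_append.mp ha with h1 | h1
          · have h3 := hgt a h1
            have h2 : h 0 < h (0 + 1) := hSM (by omega)
            omega
          · have : a = msq j := by simpa using h1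
            subst this
            rw [← hj]
            exact hSM (by omega)
      rw [← rext_snoc s (msq j) h hj] at hmain
      exact hmain
    exact hrej D hDsm hDrange hacc
  set ι := Nat.nth (fun i => ¬ PStep Q s (ch i)) with hι
  have hιsm : StrictMono ι := Nat.nth_strictMono hGoodInf
  have hιmem : ∀ k, ¬ PStep Q s (ch (ι k)) := fun k => Nat.nth_mem_of_infinite hGoodInf k
  refine ⟨fun k => msq (ι k), fun a b hab => hmsm (hιsm hab), fun k => hchrange _ 0,
    fun k => chainF_gt Q s hf _ 0, ?_⟩
  intro m hm
  obtain ⟨k, hk⟩ := hm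
  intro f'' hf''sm hf''range hacc''
  apply hιmem k
  set i := ι k with hidef
  have hmval : m = msq i := by rw [← hk]
  refine ⟨fun j => f'' (j + (msq i + 1)), fun a b hab => hf''sm (by omega), ?_, ?_⟩
  · intro j
    obtain ⟨k1, hk1⟩ := hf''range (j + (msq i + 1))
    have hbig : msq i < f'' (j + (msq i + 1)) := by
      have := sm_le hf''sm (j + (msq i + 1))
      omega
    rw [← hk1] at hbig
    have hlt : i < ι k1 := hmsm.lt_iff_lt.mp hbig
    obtain ⟨m', hm'⟩ := hsub2 i (ι k1) hlt 0
    refine ⟨m', ?_⟩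
    have hm'' : ch i (m' + 1) = ch (ι k1) 0 := hm'
    have hk1' : msq (ι k1) = f'' (j + (msq i + 1)) := hk1
    show ch i (m' + 1) = _
    rw [hm'']
    exact hk1'
  · have : raccepts Q (s ++ [m]) (fun j => f'' (j + (msq i + 1))) :=
      raccepts_mono (fun j => ⟨j + (msq i + 1), rfl⟩) hacc''
    rw [hmval] at this
    exact this

end Step


section Steps

variable {Q : ℕ → (ℕ → ℕ) → Prop}

lemma mem_le_foldr_max (l : List ℕ) : ∀ a ∈ l, a ≤ l.foldr max 0 := by
  induction l with
  | nil => simp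
  | cons b l ih =>
    intro a ha
    rcases List.mem_cons.mp ha with h | h
    · subst h
      exact le_max_left _ _
    · exact le_trans (ih a h) (le_max_right _ _)

lemma steps_lemma {f : ℕ → ℕ} (hf : StrictMono f) (L : List (List ℕ)) (B : ℕ)
    (hrej : ∀ s ∈ L, rrejects Q s f) :
    ∃ f' : ℕ → ℕ, StrictMono f' ∧ (∀ k, f' k ∈ Set.range f) ∧ (∀ k, B < f' k) ∧
      ∀ s ∈ L, ∀ m ∈ Set.range f', rrejects Q (s ++ [m]) f' := by
  induction L generalizing f with
  | nil =>
    refine ⟨fun k => f (k + (B + 1)), fun a b hab => hf (by omega), fun k => ⟨_, rfl⟩,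
      fun k => ?_, by simp⟩
    show B < f (k + (B + 1))
    have := sm_le hf (k + (B + 1))
    omega
  | cons s L ih =>
    obtain ⟨f₁, h1sm, h1r, h1B, h1main⟩ :=
      ih hf (fun s' hs' => hrej s' (List.mem_cons_of_mem _ hs'))
    obtain ⟨f₂, h2sm, h2r, h2B, h2main⟩ :=
      step_lemma Q s h1sm
        (rrejects_mono h1r (hrej s List.mem_cons_self)) B
    refine ⟨f₂, h2sm, range_trans h1r h2r, fun k => ?_, ?_⟩
    · obtain ⟨j, hj⟩ := h2r k
      have := h1B j
      omega
    · intro s' hs' m hm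
      rcases List.mem_cons.mp hs' with h | h
      · subst h
        exact h2main m hm
      · refine rrejects_mono h2r (h1main s' h m ?_)
        obtain ⟨j, hj⟩ := hm
        obtain ⟨i, hi⟩ := h2r j
        exact ⟨i, by rw [hi, hj]⟩

end Steps

section Fusion

variable (Q : ℕ → (ℕ → ℕ) → Prop)

structure FState (f : ℕ → ℕ) where
  M : ℕ → ℕ
  l : List ℕ
  hM : StrictMono M
  hrange : ∀ k, M k ∈ Set.range f
  hsorted : l.Pairwise (· < ·)
  hlmem : ∀ a ∈ l, a ∈ Set.range f
  hbound : ∀ a ∈ l, ∀ k, a < M k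
  hrej : ∀ s, s.Sublist l → rrejects Q s M

variable {Q}

noncomputable def fstep {f : ℕ → ℕ} (st : FState Q f) : FState Q f :=
  let ex := steps_lemma st.hM st.l.sublists (st.l.foldr max 0)
      (fun s hs => st.hrej s (List.mem_sublists.mp hs))
  { M := fun k => ex.choose (k + 1)
    l := st.l ++ [ex.choose 0]
    hM := fun a b hab => ex.choose_spec.1 (by omega)
    hrange := fun k => by
      obtain ⟨j, hj⟩ := ex.choose_spec.2.1 (k + 1)
      obtain ⟨i, hi⟩ := st.hrange j
      exact ⟨i, by rw [hi, hj]⟩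
    hsorted := by
      rw [List.pairwise_append]
      refine ⟨st.hsorted, by simp, ?_⟩
      intro a ha b hb
      rcases List.mem_singleton.mp hb with rfl
      have h1 : a ≤ st.l.foldr max 0 := mem_le_foldr_max _ a ha
      have h2 := ex.choose_spec.2.2.1 0
      omega
    hlmem := by
      intro a ha
      rcases List.mem_append.mp ha with h | h
      · exact st.hlmem a h
      · rcases List.mem_singleton.mp h with rfl
        obtain ⟨j, hj⟩ := ex.choose_spec.2.1 0
        exact st.hrange j |>.imp fun i hi => by rw [hi, hj]
    hbound := by
      intro a ha k
      rcases List.mem_append.mp ha with h | h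
      · have h1 : a ≤ st.l.foldr max 0 := mem_le_foldr_max _ a h
        have h2 := ex.choose_spec.2.2.1 (k + 1)
        show a < ex.choose (k + 1)
        omega
      · rcases List.mem_singleton.mp h with rfl
        exact ex.choose_spec.1 (by omega)
    hrej := by
      intro s hs
      rcases List.sublist_append_iff.mp hs with ⟨l₁, l₂, rfl, hl₁, hl₂⟩
      rcases List.sublist_singleton.mp hl₂ with rfl | rfl
      · rw [List.append_nil]
        exact rrejects_mono (fun k => ex.choose_spec.2.1 (k + 1)) (st.hrej l₁ hl₁)
      · refine rrejects_mono (f := ex.choose) (fun k => ⟨k + 1, rfl⟩) ?_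
        exact ex.choose_spec.2.2.2 l₁ (List.mem_sublists.mpr hl₁) _ ⟨0, rfl⟩ }

lemma fstep_spec {f : ℕ → ℕ} (st : FState Q f) :
    ∃ m, (fstep st).l = st.l ++ [m] ∧ m ∈ Set.range st.M ∧
      (∀ k, (fstep st).M k ∈ Set.range st.M) ∧ (∀ k, m < (fstep st).M k) := by
  refine ⟨_, rfl, ?_, ?_, ?_⟩
  · exact (steps_lemma st.hM st.l.sublists (st.l.foldr max 0)
      (fun s hs => st.hrej s (List.mem_sublists.mp hs))).choose_spec.2.1 0
  · exact fun k => (steps_lemma st.hM st.l.sublists (st.l.foldr max 0)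
      (fun s hs => st.hrej s (List.mem_sublists.mp hs))).choose_spec.2.1 (k + 1)
  · exact fun k => (steps_lemma st.hM st.l.sublists (st.l.foldr max 0)
      (fun s hs => st.hrej s (List.mem_sublists.mp hs))).choose_spec.1 (by omega)

noncomputable def fchain {f : ℕ → ℕ} (hf : StrictMono f) (hrej0 : rrejects Q [] f) :
    ℕ → FState Q f
  | 0 => ⟨f, [], hf, fun k => ⟨k, rfl⟩, by simp, by simp, by simp,
      fun s hs => by rw [List.sublist_nil.mp hs]; exact hrej0⟩
  | i + 1 => fstep (fchain hf hrej0 i)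

/-- The fusion lemma. -/
theorem fusion {f : ℕ → ℕ} (hf : StrictMono f) (hrej0 : rrejects Q [] f) :
    ∃ g : ℕ → ℕ, StrictMono g ∧ (∀ k, g k ∈ Set.range f) ∧
      ∀ s : List ℕ, s.Pairwise (· < ·) → (∀ a ∈ s, a ∈ Set.range g) → rrejects Q s g := by
  classical
  set st := fchain hf hrej0 with hst
  have hlsucc : ∀ i, ∃ m, (st (i + 1)).l = (st i).l ++ [m] ∧ m ∈ Set.range (st i).M ∧
      (∀ k, (st (i + 1)).M k ∈ Set.range (st i).M) ∧ (∀ k, m < (st (i + 1)).M k) :=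
    fun i => fstep_spec (st i)
  choose msq hmsq hmrange hMnest hmlt using hlsucc
  set g := msq with hg
  have hllen : ∀ i, (st i).l.length = i := by
    intro i
    induction i with
    | zero => rfl
    | succ i ih => rw [hmsq i, List.length_append, ih]; rfl
  have hlmem : ∀ i a, a ∈ (st i).l ↔ ∃ j, j < i ∧ g j = a := by
    intro i
    induction i with
    | zero => simp [hst, fchain]
    | succ i ih =>
      intro a
      rw [hmsq i]
      constructor
      · intro ha
        rcases List.mem_append.mp ha with h | h
        · obtain ⟨j, hj, hja⟩ := (ih a).mp h
          exact ⟨j, by omega, hja⟩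
        · rcases List.mem_singleton.mp h with rfl
          exact ⟨i, by omega, rfl⟩
      · rintro ⟨j, hj, rfl⟩
        rcases Nat.lt_or_ge j i with h | h
        · exact List.mem_append.mpr (Or.inl ((ih _).mpr ⟨j, h, rfl⟩))
        · have : j = i := by omega
          subst this
          simp
  have hMnest' : ∀ i j, i ≤ j → ∀ k, (st j).M k ∈ Set.range (st i).M := by
    intro i j hij
    induction j with
    | zero =>
      have : i = 0 := by omega
      subst this
      exact fun k => ⟨k, rfl⟩
    | succ j ih =>
      rcases Nat.lt_or_ge i (j + 1) with h | h
      · intro k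
        obtain ⟨m, hm⟩ := hMnest j k
        obtain ⟨i', hi'⟩ := ih (by omega) m
        exact ⟨i', by rw [hi', hm]⟩
      · have : i = j + 1 := by omega
        subst this
        exact fun k => ⟨k, rfl⟩
  have hgM : ∀ i j, i ≤ j → g j ∈ Set.range (st i).M := by
    intro i j hij
    obtain ⟨m, hm⟩ := hmrange j
    obtain ⟨i', hi'⟩ := hMnest' i j hij m
    exact ⟨i', by rw [hi', hm]⟩
  have hgsm : StrictMono g := by
    apply strictMono_nat_of_lt_succ
    intro k
    have h1 : g k ∈ (st (k + 1)).l := (hlmem (k + 1) (g k)).mpr ⟨k, by omega, rfl⟩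
    obtain ⟨m, hm⟩ := hmrange (k + 1)
    have := (st (k + 1)).hbound (g k) h1 m
    rw [hm] at this
    exact this
  have hgrange : ∀ k, g k ∈ Set.range f := by
    intro k
    have h1 : g k ∈ (st (k + 1)).l := (hlmem (k + 1) (g k)).mpr ⟨k, by omega, rfl⟩
    exact (st (k + 1)).hlmem _ h1
  refine ⟨g, hgsm, hgrange, ?_⟩
  intro s hssort hsmem
  -- find an index bound J for the entries of s
  have hidx : ∀ a ∈ s, ∃ j, g j = a := by
    intro a ha
    obtain ⟨j, hj⟩ := hsmem a ha
    exact ⟨j, hj⟩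
  obtain ⟨J, hJ⟩ : ∃ J, ∀ a ∈ s, ∃ j ≤ J, g j = a := by
    clear hssort
    induction s with
    | nil => exact ⟨0, by simp⟩
    | cons a s ih =>
      obtain ⟨J₁, hJ₁⟩ := ih (fun b hb => hidx b (List.mem_cons_of_mem _ hb))
        (fun b hb => hsmem b (List.mem_cons_of_mem _ hb))
      obtain ⟨j₀, hj₀⟩ := hidx a (by simp)
      refine ⟨max J₁ j₀, ?_⟩
      intro b hb
      rcases List.mem_cons.mp hb with rfl | hb
      · exact ⟨j₀, le_max_right _ _, hj₀⟩
      · obtain ⟨j, hjle, hjb⟩ := hJ₁ b hb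
        exact ⟨j, le_trans hjle (le_max_left _ _), hjb⟩
  have hsub : s.Sublist (st (J + 1)).l := by
    apply sorted_subset_sublist _ _ hssort (st (J + 1)).hsorted
    intro a ha
    obtain ⟨j, hjle, hja⟩ := hJ a ha
    exact (hlmem (J + 1) a).mpr ⟨j, by omega, hja⟩
  have hrejs : rrejects Q s (st (J + 1)).M := (st (J + 1)).hrej s hsub
  intro f'' hf''sm hf''range hacc
  refine hrejs (fun i => f'' (i + (g J + 1))) (fun a b hab => hf''sm (by omega)) ?_
    (raccepts_mono (fun i => ⟨i + (g J + 1), rfl⟩) hacc)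
  intro i
  obtain ⟨j, hj⟩ := hf''range (i + (g J + 1))
  have hbig : g J < f'' (i + (g J + 1)) := by
    have := sm_le hf''sm (i + (g J + 1))
    omega
  rw [← hj] at hbig
  have hgt : J < j := hgsm.lt_iff_lt.mp hbig
  obtain ⟨i', hi'⟩ := hgM (J + 1) j hgt
  exact ⟨i', by rw [hi', hj]⟩

end Fusion


section Main

variable {Q : ℕ → (ℕ → ℕ) → Prop}

theorem gp_dichotomy (hQ : ∀ n (g g' : ℕ → ℕ), (∀ k < n, g k = g' k) → Q n g → Q n g')
    {f : ℕ → ℕ} (hf : StrictMono f) :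
    ∃ g : ℕ → ℕ, StrictMono g ∧ (∀ k, g k ∈ Set.range f) ∧
      ((∀ h : ℕ → ℕ, StrictMono h → (∀ k, h k ∈ Set.range g) → ∀ n, Q n h) ∨
       (∀ h : ℕ → ℕ, StrictMono h → (∀ k, h k ∈ Set.range g) → ∃ n, ¬ Q n h)) := by
  classical
  by_cases hex : ∃ f', StrictMono f' ∧ (∀ k, f' k ∈ Set.range f) ∧ raccepts Q [] f'
  · obtain ⟨f', h1, h2, h3⟩ := hex
    refine ⟨f', h1, h2, Or.inr ?_⟩
    intro h hsm hr
    have hb := h3 h hsm hr (by simp)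
    have heq : rext [] h = h := by
      funext k
      simp [rext]
    rwa [heq] at hb
  · have hrej0 : rrejects Q [] f := by
      intro f' h1 h2 h3
      exact hex ⟨f', h1, h2, h3⟩
    obtain ⟨g, hgsm, hgr, hgrej⟩ := fusion hf hrej0
    refine ⟨g, hgsm, hgr, Or.inl ?_⟩
    intro h hsm hr n
    by_contra hn
    set s := List.ofFn (fun i : Fin n => h i) with hs
    have hslen : s.length = n := by simp [hs]
    have hsget : ∀ k, k < n → s.getD k 0 = h k := by
      intro k hk
      rw [hs, List.getD_eq_getElem?_getD, List.getElem?_ofFn]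
      simp [hk]
    have hssort : s.Pairwise (· < ·) := by
      rw [hs, List.pairwise_ofFn]
      intro i j hij
      exact hsm hij
    have hsmem : ∀ a ∈ s, a ∈ Set.range g := by
      intro a ha
      rw [hs] at ha
      obtain ⟨i, hi⟩ := List.mem_ofFn.mp ha
      exact hi ▸ hr i
    have hacc : raccepts Q s g := by
      intro h' h'sm h'r h'gt
      refine ⟨n, fun hQn => hn ?_⟩
      refine hQ n (rext s h') h ?_ hQn
      intro k hk
      simp only [rext, hslen, if_pos hk]
      exact hsget k hk
    exact hgrej s hssort hsmem g hgsm (fun k => ⟨k, rfl⟩) hacc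

theorem gp_iter (Qf : ℕ → ℕ → (ℕ → ℕ) → Prop)
    (hQf : ∀ j n (g g' : ℕ → ℕ), (∀ k < n, g k = g' k) → Qf j n g → Qf j n g')
    (hnoleft : ∀ j (g : ℕ → ℕ), StrictMono g →
      ¬ (∀ h : ℕ → ℕ, StrictMono h → (∀ k, h k ∈ Set.range g) → ∀ n, Qf j n h)) :
    ∃ d : ℕ → ℕ, StrictMono d ∧ ∀ j (h : ℕ → ℕ), StrictMono h →
      (∀ k, h k ∈ Set.range d) → d j ≤ h 0 → ∃ n, ¬ Qf j n h := by
  classical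
  have step : ∀ j (f : ℕ → ℕ), StrictMono f → ∃ g : ℕ → ℕ, StrictMono g ∧
      (∀ k, g k ∈ Set.range f) ∧
      (∀ h : ℕ → ℕ, StrictMono h → (∀ k, h k ∈ Set.range g) → ∃ n, ¬ Qf j n h) := by
    intro j f hf
    obtain ⟨g, h1, h2, h3 | h3⟩ := gp_dichotomy (hQf j) hf
    · exact absurd h3 (hnoleft j g h1)
    · exact ⟨g, h1, h2, h3⟩
  choose F hFsm hFr hFbad using step
  set E : ℕ → {g : ℕ → ℕ // StrictMono g} :=
    fun j => Nat.rec (motive := fun _ => {g : ℕ → ℕ // StrictMono g}) ⟨F 0 id strictMono_id, hFsm 0 id strictMono_id⟩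
      (fun j Ej => ⟨F (j + 1) Ej.1 Ej.2, hFsm (j + 1) Ej.1 Ej.2⟩) j with hE
  have hEnest : ∀ j k, (E (j + 1)).1 k ∈ Set.range (E j).1 :=
    fun j k => hFr (j + 1) (E j).1 (E j).2 k
  have hEbad : ∀ j (h : ℕ → ℕ), StrictMono h → (∀ k, h k ∈ Set.range (E j).1) →
      ∃ n, ¬ Qf j n h := by
    intro j
    cases j with
    | zero => exact hFbad 0 id strictMono_id
    | succ j => exact hFbad (j + 1) (E j).1 (E j).2
  have hEnest' : ∀ i j, i ≤ j → ∀ k, (E j).1 k ∈ Set.range (E i).1 := by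
    intro i j hij
    induction j with
    | zero =>
      have : i = 0 := by omega
      subst this
      exact fun k => ⟨k, rfl⟩
    | succ j ih =>
      rcases Nat.lt_or_ge i (j + 1) with hlt | hge
      · intro k
        obtain ⟨m, hm⟩ := hEnest j k
        obtain ⟨i', hi'⟩ := ih (by omega) m
        exact ⟨i', by rw [hi', hm]⟩
      · have : i = j + 1 := by omega
        subst this
        exact fun k => ⟨k, rfl⟩
  set d : ℕ → ℕ := fun k => (E k).1 k with hd
  have hdsm : StrictMono d := by
    apply strictMono_nat_of_lt_succ
    intro k
    have h1 : (E k).1 (k + 1) ≤ (E (k + 1)).1 (k + 1) :=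
      sm_range_le (E k).2 (E (k + 1)).2 (hEnest k) (k + 1)
    have h2 : (E k).1 k < (E k).1 (k + 1) := (E k).2 (by omega)
    show (E k).1 k < (E (k + 1)).1 (k + 1)
    omega
  refine ⟨d, hdsm, ?_⟩
  intro j h hsm hr hge
  refine hEbad j h hsm ?_
  intro k
  obtain ⟨t, ht⟩ := hr k
  have hk0 : d j ≤ h k := le_trans hge (hsm.monotone (by omega))
  rw [← ht] at hk0
  have htj : j ≤ t := by
    by_contra hcon
    have := hdsm (show t < j by omega)
    omega
  obtain ⟨i', hi'⟩ := hEnest' j t htj t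
  exact ⟨i', by rw [hi']; exact ht⟩

end Main


section Alt

lemma exists_alternating {A B : Set ℕ} (hA : A.Infinite) (hB : B.Infinite) (j : ℕ) :
    ∃ τ : ℕ → ℕ, StrictMono τ ∧ j ≤ τ 0 ∧
      ∀ i, (Even i → τ i ∈ A) ∧ (¬ Even i → τ i ∈ B) := by
  classical
  have hstep : ∀ (i x : ℕ), ∃ b, b ∈ (if Even i then A else B) ∧ x < b := by
    intro i x
    split
    · exact hA.exists_gt x
    · exact hB.exists_gt x
  set τ : ℕ → ℕ := fun i => Nat.rec ((hstep 0 j).choose)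
    (fun i prev => (hstep (i + 1) prev).choose) i with hτ
  have hτ0 : τ 0 = (hstep 0 j).choose := rfl
  have hτs : ∀ i, τ (i + 1) = (hstep (i + 1) (τ i)).choose := fun i => rfl
  have hmono : ∀ i, τ i < τ (i + 1) := by
    intro i
    rw [hτs i]
    exact (hstep (i + 1) (τ i)).choose_spec.2
  have hmem : ∀ i, τ i ∈ (if Even i then A else B) := by
    intro i
    cases i with
    | zero => exact (hstep 0 j).choose_spec.1
    | succ i =>
      rw [hτs i]
      exact (hstep (i + 1) (τ i)).choose_spec.1
  refine ⟨τ, strictMono_nat_of_lt_succ hmono, le_of_lt (hstep 0 j).choose_spec.2, ?_⟩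
  intro i
  constructor
  · intro hi
    have := hmem i
    rwa [if_pos hi] at this
  · intro hi
    have := hmem i
    rwa [if_neg hi] at this

end Alt


section TypeRefute

variable {X : Type*} [NormedAddCommGroup X] [NormedSpace ℂ X]

open NormedSpace

lemma type_refutes_independence (p T : ℝ) (hp : 1 < p) (hT : 0 < T)
    (htype : HasTypeWithConstant (StrongDual ℂ X) p T)
    (f : ℕ → StrongDual ℂ X) (c : ℝ) (hc : ∀ n, ‖f n‖ ≤ c)
    (r s : ℚ) (hrs : r < s) (g : ℕ → ℕ) (hg : StrictMono g)
    (H : ∀ h : ℕ → ℕ, StrictMono h → (∀ k, h k ∈ Set.range g) → ∀ n : ℕ,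
      ∃ x : StrongDual ℂ (StrongDual ℂ X), ‖x‖ ≤ 1 ∧ ∀ k < n,
        (Even k → (x (f (h k))).re ≤ (r : ℝ)) ∧
        (¬ Even k → (s : ℝ) ≤ (x (f (h k))).re)) : False := by
  classical
  have hc0 : 0 ≤ c := le_trans (norm_nonneg (f 0)) (hc 0)
  set δ : ℝ := (s : ℝ) - (r : ℝ) with hδ
  have hδ0 : 0 < δ := by
    rw [hδ, sub_pos]
    exact_mod_cast hrs
  -- Main estimate: for every M, M * δ ≤ T * (2 * c) * M ^ (1 / p)
  have key : ∀ M : ℕ, (M : ℝ) * δ ≤ T * ((M : ℝ) ^ (1 / p) * (2 * c)) := by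
    intro M
    set u : Fin M → StrongDual ℂ X := fun k => f (g (8 * k + 4)) - f (g (8 * k + 3)) with hu
    -- lower bound each signed sum
    have hlow : ∀ ε : Fin M → Bool,
        (M : ℝ) * δ ≤ ‖∑ i, (if ε i then u i else -u i)‖ := by
      intro ε
      set εe : ℕ → Bool := fun k => if hk : k < M then ε ⟨k, hk⟩ else true with hεe
      set σ : ℕ → ℕ := fun jj => if jj < 4 * M then
          8 * (jj / 4) + (if εe (jj / 4) = true then 3 else 2) + jj % 4
        else 8 * M + (jj - 4 * M) with hσ
      have hσval : ∀ jj, jj < 4 * M →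
          σ jj = 8 * (jj / 4) + (if εe (jj / 4) = true then 3 else 2) + jj % 4 := by
        intro jj hjj
        rw [hσ]
        simp [hjj]
      have hσsm : StrictMono σ := by
        apply strictMono_nat_of_lt_succ
        intro jj
        by_cases h1 : jj + 1 < 4 * M
        · have h0 : jj < 4 * M := by omega
          rw [hσval jj h0, hσval (jj + 1) h1]
          by_cases h2 : (jj + 1) % 4 = 0
          · have ha : 2 ≤ (if εe (jj / 4) = true then 3 else 2) ∧
                (if εe (jj / 4) = true then 3 else 2) ≤ 3 := by split <;> omega
            have hb : 2 ≤ (if εe ((jj + 1) / 4) = true then 3 else 2) ∧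
                (if εe ((jj + 1) / 4) = true then 3 else 2) ≤ 3 := by split <;> omega
            omega
          · have hq : (jj + 1) / 4 = jj / 4 := by omega
            rw [hq]
            omega
        · by_cases h0 : jj < 4 * M
          · have hM1 : 1 ≤ M := by omega
            rw [hσval jj h0, hσ]
            simp only [if_neg h1]
            have ha : (if εe (jj / 4) = true then 3 else 2) ≤ 3 := by split <;> omega
            omega
          · rw [hσ]
            simp only [if_neg h1, if_neg h0]
            omega
      obtain ⟨x, hx1, hx2⟩ := H (fun k => g (σ k)) (hg.comp hσsm)
        (fun k => ⟨σ k, rfl⟩) (4 * M)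
      -- each term of the signed sum has real part at least δ under x
      have hterm : ∀ k : Fin M, δ ≤ (x (if ε k then u k else -u k)).re := by
        intro k
        have hk4 : (k : ℕ) < M := k.2
        have hεek : εe (k : ℕ) = ε k := by
          rw [hεe]
          simp [hk4]
        by_cases hεk : ε k = true
        · have p1 : σ (4 * (k : ℕ)) = 8 * (k : ℕ) + 3 := by
            rw [hσval _ (by omega)]
            have h4 : 4 * (k : ℕ) / 4 = (k : ℕ) := by omega
            rw [h4, hεek, hεk]
            simp
            all_goals omega
          have p2 : σ (4 * (k : ℕ) + 1) = 8 * (k : ℕ) + 4 := by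
            rw [hσval _ (by omega)]
            have h4 : (4 * (k : ℕ) + 1) / 4 = (k : ℕ) := by omega
            rw [h4, hεek, hεk]
            simp
            all_goals omega
          have e1 := (hx2 (4 * (k : ℕ)) (by omega)).1 ⟨2 * (k : ℕ), by ring⟩
          have e2 := (hx2 (4 * (k : ℕ) + 1) (by omega)).2
            (by simp [Nat.even_iff]; omega)
          rw [p1] at e1
          rw [p2] at e2
          rw [if_pos hεk]
          show δ ≤ (x (f (g (8 * (k : ℕ) + 4)) - f (g (8 * (k : ℕ) + 3)))).re
          rw [map_sub, Complex.sub_re, hδ]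
          linarith
        · have hεk' : εe (k : ℕ) = false := by rw [hεek]; simpa using hεk
          have p1 : σ (4 * (k : ℕ) + 1) = 8 * (k : ℕ) + 3 := by
            rw [hσval _ (by omega)]
            have h4 : (4 * (k : ℕ) + 1) / 4 = (k : ℕ) := by omega
            rw [h4, hεk']
            simp
            all_goals omega
          have p2 : σ (4 * (k : ℕ) + 2) = 8 * (k : ℕ) + 4 := by
            rw [hσval _ (by omega)]
            have h4 : (4 * (k : ℕ) + 2) / 4 = (k : ℕ) := by omega
            rw [h4, hεk']
            simp
            all_goals omega
          have e1 := (hx2 (4 * (k : ℕ) + 1) (by omega)).2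
            (by simp [Nat.even_iff]; omega)
          have e2 := (hx2 (4 * (k : ℕ) + 2) (by omega)).1
            (by simp [Nat.even_iff]; omega)
          rw [p1] at e1
          rw [p2] at e2
          rw [if_neg hεk]
          show δ ≤ (x (-(f (g (8 * (k : ℕ) + 4)) - f (g (8 * (k : ℕ) + 3))))).re
          rw [map_neg, Complex.neg_re, map_sub, Complex.sub_re, hδ]
          linarith
      -- sum over k
      set W : StrongDual ℂ X := ∑ i, (if ε i then u i else -u i) with hW
      have hsum : (M : ℝ) * δ ≤ (x W).re := by
        rw [hW, map_sum]
        rw [Complex.re_sum]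
        calc (M : ℝ) * δ = ∑ _i : Fin M, δ := by
              rw [Finset.sum_const, Finset.card_univ, Fintype.card_fin, nsmul_eq_mul]
          _ ≤ ∑ i, (x (if ε i then u i else -u i)).re :=
              Finset.sum_le_sum (fun i _ => hterm i)
      calc (M : ℝ) * δ ≤ (x W).re := hsum
        _ ≤ |(x W).re| := le_abs_self _
        _ ≤ ‖x W‖ := Complex.abs_re_le_norm _
        _ = ‖x W‖ := rfl
        _ ≤ ‖x‖ * ‖W‖ := x.le_opNorm W
        _ ≤ 1 * ‖W‖ := mul_le_mul_of_nonneg_right hx1 (norm_nonneg _)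
        _ = ‖W‖ := one_mul _
    -- apply the type inequality
    have htM := htype M u
    have hcard : Fintype.card (Fin M → Bool) = 2 ^ M := by
      rw [Fintype.card_fun, Fintype.card_bool, Fintype.card_fin]
    have hL : (M : ℝ) * δ ≤
        (1 / 2 ^ M : ℝ) * ∑ ε : Fin M → Bool, ‖∑ i, (if ε i then u i else -u i)‖ := by
      have hs2 : (2 ^ M : ℝ) * ((M : ℝ) * δ) ≤
          ∑ ε : Fin M → Bool, ‖∑ i, (if ε i then u i else -u i)‖ := by
        calc (2 ^ M : ℝ) * ((M : ℝ) * δ)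
            = ∑ _ε : Fin M → Bool, (M : ℝ) * δ := by
              rw [Finset.sum_const, Finset.card_univ, hcard, nsmul_eq_mul]
              push_cast
              ring
          _ ≤ _ := Finset.sum_le_sum (fun ε _ => hlow ε)
      have h2M : (0 : ℝ) < 2 ^ M := by positivity
      rw [div_mul_eq_mul_div, one_mul, le_div_iff₀ h2M]
      linarith
    have hR : T * (∑ i, ‖u i‖ ^ p) ^ (1 / p) ≤ T * ((M : ℝ) ^ (1 / p) * (2 * c)) := by
      apply mul_le_mul_of_nonneg_left _ (le_of_lt hT)
      have hub : ∀ i : Fin M, ‖u i‖ ≤ 2 * c := by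
        intro i
        have h1 := hc (g (8 * (i : ℕ) + 4))
        have h2 := hc (g (8 * (i : ℕ) + 3))
        calc ‖u i‖ ≤ ‖f (g (8 * (i : ℕ) + 4))‖ + ‖f (g (8 * (i : ℕ) + 3))‖ :=
              norm_sub_le _ _
          _ ≤ 2 * c := by linarith
      have hp0 : (0 : ℝ) ≤ p := by linarith
      have hsum : ∑ i : Fin M, ‖u i‖ ^ p ≤ (M : ℝ) * (2 * c) ^ p := by
        calc ∑ i : Fin M, ‖u i‖ ^ p ≤ ∑ _i : Fin M, (2 * c) ^ p :=
              Finset.sum_le_sum (fun i _ =>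
                Real.rpow_le_rpow (norm_nonneg _) (hub i) hp0)
          _ = (M : ℝ) * (2 * c) ^ p := by
              rw [Finset.sum_const, Finset.card_univ, Fintype.card_fin, nsmul_eq_mul]
      have hsnn : (0 : ℝ) ≤ ∑ i : Fin M, ‖u i‖ ^ p :=
        Finset.sum_nonneg (fun i _ => Real.rpow_nonneg (norm_nonneg _) _)
      calc (∑ i, ‖u i‖ ^ p) ^ (1 / p)
          ≤ ((M : ℝ) * (2 * c) ^ p) ^ (1 / p) :=
            Real.rpow_le_rpow hsnn hsum (by positivity)
        _ = (M : ℝ) ^ (1 / p) * (2 * c) := by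
            rw [Real.mul_rpow (by positivity) (Real.rpow_nonneg (by linarith) _),
              ← Real.rpow_mul (by linarith : (0:ℝ) ≤ 2 * c)]
            have hpp : p * (1 / p) = 1 := by
              field_simp
            rw [hpp, Real.rpow_one]
    calc (M : ℝ) * δ ≤ _ := hL
      _ ≤ T * (∑ i, ‖u i‖ ^ p) ^ (1 / p) := htM
      _ ≤ T * ((M : ℝ) ^ (1 / p) * (2 * c)) := hR
  -- contradiction for large M
  have hexp : (0 : ℝ) < 1 - 1 / p := by
    have h1 : 1 / p < 1 := by
      rw [div_lt_one (by linarith)]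
      exact hp
    linarith
  have htend : Tendsto (fun M : ℕ => ((M : ℕ) : ℝ) ^ (1 - 1 / p)) atTop atTop :=
    (tendsto_rpow_atTop hexp).comp tendsto_natCast_atTop_atTop
  obtain ⟨M, hMb, hM1⟩ :=
    ((htend.eventually_gt_atTop (T * (2 * c) / δ)).and (eventually_ge_atTop 1)).exists
  have hkey := key M
  have hMpos : (0 : ℝ) < (M : ℝ) := by exact_mod_cast hM1
  have hppos : (0 : ℝ) < (M : ℝ) ^ (1 / p) := Real.rpow_pos_of_pos hMpos _
  have hsplit : (M : ℝ) = (M : ℝ) ^ (1 / p) * (M : ℝ) ^ (1 - 1 / p) := by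
    rw [← Real.rpow_add hMpos]
    norm_num
  rw [div_lt_iff₀ hδ0] at hMb
  -- hMb : T * (2 * c) < M ^ (1 - 1/p) * δ
  have h3 : (M : ℝ) ^ (1 / p) * (T * (2 * c)) <
      (M : ℝ) ^ (1 / p) * ((M : ℝ) ^ (1 - 1 / p) * δ) :=
    mul_lt_mul_of_pos_left hMb hppos
  have hkey2 : (M : ℝ) ^ (1 / p) * ((M : ℝ) ^ (1 - 1 / p) * δ) ≤
      (M : ℝ) ^ (1 / p) * (T * (2 * c)) := by
    calc (M : ℝ) ^ (1 / p) * ((M : ℝ) ^ (1 - 1 / p) * δ) = (M : ℝ) * δ := by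
          rw [← mul_assoc, ← hsplit]
      _ ≤ T * ((M : ℝ) ^ (1 / p) * (2 * c)) := hkey
      _ = (M : ℝ) ^ (1 / p) * (T * (2 * c)) := by ring
  linarith

end TypeRefute


section WeakCauchy

variable {X : Type*} [NormedAddCommGroup X] [NormedSpace ℂ X]

open NormedSpace

noncomputable def pairOf (j : ℕ) : ℚ × ℚ := (Denumerable.eqv (ℚ × ℚ)).symm j

def QF (f : ℕ → StrongDual ℂ X) (j n : ℕ) (h : ℕ → ℕ) : Prop :=
  if (pairOf j).1 < (pairOf j).2 then
    ∃ x : StrongDual ℂ (StrongDual ℂ X), ‖x‖ ≤ 1 ∧ ∀ k < n,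
      (Even k → (x (f (h k))).re ≤ (((pairOf j).1 : ℚ) : ℝ)) ∧
      (¬ Even k → (((pairOf j).2 : ℚ) : ℝ) ≤ (x (f (h k))).re)
  else n = 0

theorem exists_weak_cauchy_subseq (p T : ℝ) (hp : 1 < p) (hT : 0 < T)
    (htype : HasTypeWithConstant (StrongDual ℂ X) p T)
    (f : ℕ → StrongDual ℂ X) (c : ℝ) (hc : ∀ n, ‖f n‖ ≤ c) :
    ∃ d : ℕ → ℕ, StrictMono d ∧ ∀ Φ : StrongDual ℂ (StrongDual ℂ X),
      ∃ L : ℂ, Tendsto (fun k => Φ (f (d k))) atTop (𝓝 L) := by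
  classical
  have hQf : ∀ j n (g g' : ℕ → ℕ), (∀ k < n, g k = g' k) → QF f j n g → QF f j n g' := by
    intro j n g g' hpre hQ
    by_cases hj : (pairOf j).1 < (pairOf j).2
    · rw [QF, if_pos hj] at hQ ⊢
      obtain ⟨x, hx1, hx2⟩ := hQ
      refine ⟨x, hx1, fun k hk => ?_⟩
      rw [← hpre k hk]
      exact hx2 k hk
    · rw [QF, if_neg hj] at hQ ⊢
      exact hQ
  have hnoleft : ∀ j (g : ℕ → ℕ), StrictMono g →
      ¬ (∀ h : ℕ → ℕ, StrictMono h → (∀ k, h k ∈ Set.range g) → ∀ n, QF f j n h) := by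
    intro j g hg hall
    by_cases hj : (pairOf j).1 < (pairOf j).2
    · refine type_refutes_independence p T hp hT htype f c hc _ _ hj g hg ?_
      intro h hsm hr n
      have := hall h hsm hr n
      rwa [QF, if_pos hj] at this
    · have := hall g hg (fun k => ⟨k, rfl⟩) 1
      rw [QF, if_neg hj] at this
      omega
  obtain ⟨d, hdsm, hdbad⟩ := gp_iter (QF f) hQf hnoleft
  refine ⟨d, hdsm, ?_⟩
  have hreal : ∀ x : StrongDual ℂ (StrongDual ℂ X), ‖x‖ ≤ 1 →
      ∃ L : ℝ, Tendsto (fun k => (x (f (d k))).re) atTop (𝓝 L) := by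
    intro x hx
    set a : ℕ → ℝ := fun k => (x (f (d k))).re with ha
    have hbd : ∀ k, |a k| ≤ c := by
      intro k
      calc |a k| ≤ ‖x (f (d k))‖ := Complex.abs_re_le_norm _
        _ = ‖x (f (d k))‖ := rfl
        _ ≤ ‖x‖ * ‖f (d k)‖ := x.le_opNorm _
        _ ≤ 1 * c := mul_le_mul hx (hc _) (norm_nonneg _) zero_le_one
        _ = c := one_mul c
    have hbdd1 : IsBoundedUnder (· ≤ ·) atTop a :=
      Filter.isBoundedUnder_of ⟨c, fun k => (abs_le.mp (hbd k)).2⟩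
    have hbdd2 : IsBoundedUnder (· ≥ ·) atTop a :=
      Filter.isBoundedUnder_of ⟨-c, fun k => (abs_le.mp (hbd k)).1⟩
    refine ⟨limsup a atTop, tendsto_of_liminf_eq_limsup ?_ rfl hbdd1 hbdd2⟩
    by_contra hne
    have hlt : liminf a atTop < limsup a atTop :=
      lt_of_le_of_ne (liminf_le_limsup hbdd1 hbdd2) hne
    obtain ⟨rq, h1, h2⟩ := exists_rat_btwn hlt
    obtain ⟨sq, h3, h4⟩ := exists_rat_btwn h2
    have hA : {k | a k < (rq : ℝ)}.Infinite := by
      rw [← Nat.frequently_atTop_iff_infinite]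
      exact frequently_lt_of_liminf_lt hbdd1.isCoboundedUnder_ge h1
    have hB : {k | (sq : ℝ) < a k}.Infinite := by
      rw [← Nat.frequently_atTop_iff_infinite]
      exact frequently_lt_of_lt_limsup hbdd2.isCoboundedUnder_le h4
    obtain ⟨j, hpair⟩ := (Denumerable.eqv (ℚ × ℚ)).symm.surjective (rq, sq)
    rw [show (Denumerable.eqv (ℚ × ℚ)).symm j = pairOf j from rfl] at hpair
    have hrs : rq < sq := by exact_mod_cast h3
    obtain ⟨τ, hτsm, hτ0, hτmem⟩ := exists_alternating hA hB j
    obtain ⟨n, hn⟩ := hdbad j (fun i => d (τ i)) (hdsm.comp hτsm)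
      (fun i => ⟨τ i, rfl⟩) (hdsm.monotone hτ0)
    apply hn
    rw [QF, if_pos (by rw [hpair]; exact hrs)]
    refine ⟨x, hx, fun k hk => ⟨?_, ?_⟩⟩
    · intro hev
      have hm := (hτmem k).1 hev
      have : a (τ k) < (rq : ℝ) := hm
      rw [hpair]
      exact le_of_lt this
    · intro hodd
      have hm := (hτmem k).2 hodd
      have : (sq : ℝ) < a (τ k) := hm
      rw [hpair]
      exact le_of_lt this
  intro Φ
  set cn : ℝ := max ‖Φ‖ 1 with hcn
  have hcnpos : (0 : ℝ) < cn := lt_of_lt_of_le one_pos (le_max_right _ _)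
  have hcninv : (0 : ℝ) ≤ cn⁻¹ := inv_nonneg.mpr (le_of_lt hcnpos)
  set x₁ : StrongDual ℂ (StrongDual ℂ X) := ((cn⁻¹ : ℝ) : ℂ) • Φ with hx₁
  set x₂ : StrongDual ℂ (StrongDual ℂ X) := (-Complex.I * ((cn⁻¹ : ℝ) : ℂ)) • Φ with hx₂
  have hn1 : ‖x₁‖ ≤ 1 := by
    rw [hx₁]
    refine le_trans (ContinuousLinearMap.opNorm_smul_le _ _) ?_
    rw [Complex.norm_real, Real.norm_of_nonneg hcninv]
    calc cn⁻¹ * ‖Φ‖ ≤ cn⁻¹ * cn :=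
          mul_le_mul_of_nonneg_left (le_max_left _ _) hcninv
      _ = 1 := inv_mul_cancel₀ (ne_of_gt hcnpos)
  have hn2 : ‖x₂‖ ≤ 1 := by
    rw [hx₂]
    refine le_trans (ContinuousLinearMap.opNorm_smul_le _ _) ?_
    rw [norm_mul, norm_neg, Complex.norm_I, one_mul,
      Complex.norm_real, Real.norm_of_nonneg hcninv]
    calc cn⁻¹ * ‖Φ‖ ≤ cn⁻¹ * cn :=
          mul_le_mul_of_nonneg_left (le_max_left _ _) hcninv
      _ = 1 := inv_mul_cancel₀ (ne_of_gt hcnpos)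
  obtain ⟨L₁, hL₁⟩ := hreal x₁ hn1
  obtain ⟨L₂, hL₂⟩ := hreal x₂ hn2
  have hrw1 : ∀ v : StrongDual ℂ X, (x₁ v).re = cn⁻¹ * (Φ v).re := by
    intro v
    rw [hx₁, ContinuousLinearMap.smul_apply, smul_eq_mul, Complex.re_ofReal_mul]
  have hrw2 : ∀ v : StrongDual ℂ X, (x₂ v).re = cn⁻¹ * (Φ v).im := by
    intro v
    rw [hx₂, ContinuousLinearMap.smul_apply, smul_eq_mul]
    simp [Complex.mul_re, Complex.mul_im]
    try ring
  refine ⟨((cn * L₁ : ℝ) : ℂ) + ((cn * L₂ : ℝ) : ℂ) * Complex.I, ?_⟩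
  have hre : Tendsto (fun k => (Φ (f (d k))).re) atTop (𝓝 (cn * L₁)) := by
    have heq : (fun k => (Φ (f (d k))).re) = fun k => cn * (x₁ (f (d k))).re := by
      funext k
      rw [hrw1, ← mul_assoc, mul_inv_cancel₀ (ne_of_gt hcnpos), one_mul]
    rw [heq]
    exact hL₁.const_mul cn
  have him : Tendsto (fun k => (Φ (f (d k))).im) atTop (𝓝 (cn * L₂)) := by
    have heq : (fun k => (Φ (f (d k))).im) = fun k => cn * (x₂ (f (d k))).re := by
      funext k
      rw [hrw2, ← mul_assoc, mul_inv_cancel₀ (ne_of_gt hcnpos), one_mul]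
    rw [heq]
    exact hL₂.const_mul cn
  have h1 : Tendsto (fun k => (((Φ (f (d k))).re : ℝ) : ℂ) +
      (((Φ (f (d k))).im : ℝ) : ℂ) * Complex.I) atTop
      (𝓝 (((cn * L₁ : ℝ) : ℂ) + ((cn * L₂ : ℝ) : ℂ) * Complex.I)) :=
    ((Complex.continuous_ofReal.tendsto _).comp hre).add
      (((Complex.continuous_ofReal.tendsto _).comp him).mul_const _)
  have heq2 : (fun k => Φ (f (d k))) = fun k => (((Φ (f (d k))).re : ℝ) : ℂ) +
      (((Φ (f (d k))).im : ℝ) : ℂ) * Complex.I := by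
    funext k
    exact (Complex.re_add_im _).symm
  rw [heq2]
  exact h1

end WeakCauchy


section Biorth

variable {X : Type*} [NormedAddCommGroup X] [NormedSpace ℂ X]

open NormedSpace

lemma exists_biorthogonal (y : ℕ → X) (hnorm : ∀ n, ‖y n‖ = 1) (K : ℝ) (hK : 1 ≤ K)
    (hb : ∀ (m n : ℕ) (a : ℕ → ℂ), m ≤ n →
      ‖∑ i ∈ Finset.range m, a i • y i‖ ≤ K * ‖∑ i ∈ Finset.range n, a i • y i‖) :
    ∃ f : ℕ → StrongDual ℂ X, (∀ n, ‖f n‖ ≤ 2 * K) ∧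
      ∀ n m, f n (y m) = if n = m then 1 else 0 := by
  classical
  have li : LinearIndependent ℂ y := by
    rw [linearIndependent_iff']
    intro t g hsum i hit
    set a : ℕ → ℂ := fun i => if i ∈ t then g i else 0 with ha
    set N : ℕ := t.sup id + 1 with hN
    have htN : t ⊆ Finset.range N := by
      intro i hi
      rw [Finset.mem_range, hN]
      have := Finset.le_sup (f := id) hi
      simp only [id_eq] at this
      omega
    have hsum' : ∑ i ∈ Finset.range N, a i • y i = 0 := by
      rw [← hsum,
        ← Finset.sum_subset htN (fun i _ hi => by rw [ha]; simp [hi])]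
      apply Finset.sum_congr rfl
      intro i hi
      rw [ha]
      simp [hi]
    have hzero : ∀ m, m ≤ N → ‖∑ i ∈ Finset.range m, a i • y i‖ = 0 := by
      intro m hm
      have h5 := hb m N a hm
      rw [hsum'] at h5
      simp at h5
      rw [h5, norm_zero]
    have hiN : i + 1 ≤ N := by
      have := Finset.le_sup (f := id) hit
      simp only [id_eq] at this
      omega
    have hterm : ‖a i • y i‖ = 0 := by
      have h1 := hzero (i + 1) hiN
      have h2 := hzero i (by omega)
      have h3 : ∑ k ∈ Finset.range (i + 1), a k • y k =
          (∑ k ∈ Finset.range i, a k • y k) + a i • y i := Finset.sum_range_succ _ _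
      have h4 : ‖a i • y i‖ ≤ ‖∑ k ∈ Finset.range (i + 1), a k • y k‖ +
          ‖∑ k ∈ Finset.range i, a k • y k‖ := by
        rw [h3]
        have := norm_sub_le ((∑ k ∈ Finset.range i, a k • y k) + a i • y i)
          (∑ k ∈ Finset.range i, a k • y k)
        simpa using this
      have h0 := norm_nonneg (a i • y i)
      linarith
    have : ‖a i‖ = 0 := by
      rw [norm_smul, hnorm, mul_one] at hterm
      exact hterm
    have hai : a i = 0 := norm_eq_zero.mp this
    simpa [ha, hit] using hai
  set V : Subspace ℂ X := Submodule.span ℂ (Set.range y) with hV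
  have hbound : ∀ j (v : V), ‖(Finsupp.lapply j ∘ₗ li.repr : V →ₗ[ℂ] ℂ) v‖ ≤ (2 * K) * ‖v‖ := by
    intro j v
    set crep := li.repr v with hcrep
    have hv : Finsupp.linearCombination ℂ y crep = (v : X) :=
      li.linearCombination_repr v
    set N : ℕ := max (crep.support.sup id + 1) (j + 1) with hN
    have hsupN : crep.support ⊆ Finset.range N := by
      intro i hi
      rw [Finset.mem_range, hN]
      have := Finset.le_sup (f := id) hi
      simp only [id_eq] at this
      omega
    have hsum : ∑ i ∈ Finset.range N, crep i • y i = (v : X) := by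
      rw [← hv, Finsupp.linearCombination_apply, Finsupp.sum]
      exact (Finset.sum_subset hsupN (fun i _ hi => by
        rw [Finsupp.notMem_support_iff.mp hi, zero_smul])).symm
    have hpart : ∀ m, m ≤ N → ‖∑ i ∈ Finset.range m, crep i • y i‖ ≤ K * ‖(v : X)‖ := by
      intro m hm
      have := hb m N (fun i => crep i) hm
      rwa [hsum] at this
    have hterm : ‖crep j • y j‖ ≤ 2 * K * ‖(v : X)‖ := by
      have h1 := hpart (j + 1) (by omega)
      have h2 := hpart j (by omega)
      have h3 : ∑ k ∈ Finset.range (j + 1), crep k • y k =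
          (∑ k ∈ Finset.range j, crep k • y k) + crep j • y j := Finset.sum_range_succ _ _
      have h4 : ‖crep j • y j‖ ≤ ‖∑ k ∈ Finset.range (j + 1), crep k • y k‖ +
          ‖∑ k ∈ Finset.range j, crep k • y k‖ := by
        rw [h3]
        have := norm_sub_le ((∑ k ∈ Finset.range j, crep k • y k) + crep j • y j)
          (∑ k ∈ Finset.range j, crep k • y k)
        simpa using this
      linarith
    have : ‖crep j‖ ≤ 2 * K * ‖(v : X)‖ := by
      rw [norm_smul, hnorm, mul_one] at hterm
      exact hterm
    exact this
  have hK0 : (0 : ℝ) ≤ 2 * K := by linarith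
  set φ : ℕ → V →L[ℂ] ℂ := fun j =>
    LinearMap.mkContinuous (Finsupp.lapply j ∘ₗ li.repr) (2 * K) (hbound j) with hφ
  have hext : ∀ j, ∃ F : StrongDual ℂ X, (∀ v : V, F v = φ j v) ∧ ‖F‖ = ‖φ j‖ :=
    fun j => exists_extension_norm_eq V (φ j)
  choose F hFext hFnorm using hext
  refine ⟨F, ?_, ?_⟩
  · intro n
    rw [hFnorm n]
    exact LinearMap.mkContinuous_norm_le _ hK0 _
  · intro n m
    have hmem : y m ∈ V := Submodule.subset_span ⟨m, rfl⟩
    have h1 : F n (y m) = φ n ⟨y m, hmem⟩ := hFext n ⟨y m, hmem⟩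
    rw [h1]
    have h2 : li.repr ⟨y m, hmem⟩ = Finsupp.single m 1 :=
      li.repr_eq_single m ⟨y m, hmem⟩ rfl
    show (Finsupp.lapply n : (ℕ →₀ ℂ) →ₗ[ℂ] ℂ) (li.repr ⟨y m, hmem⟩) = _
    rw [h2]
    by_cases h : n = m
    · subst h
      simp
    · rw [Finsupp.lapply_apply, Finsupp.single_apply, if_neg (fun hh => h hh.symm), if_neg h]

end Biorth


end RosGP


open RosGP in
theorem weakly_null_biorthogonal_of_dual_type {X : Type*} [NormedAddCommGroup X]
    [NormedSpace ℂ X] [CompleteSpace X]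
    (p T : ℝ) (hp : 1 < p) (hT : 0 < T)
    (htype : HasTypeWithConstant (StrongDual ℂ X) p T)
    (y : ℕ → X) (hnorm : ∀ n, ‖y n‖ = 1)
    (hbasic : ∃ K : ℝ, 1 ≤ K ∧ ∀ (m n : ℕ) (a : ℕ → ℂ), m ≤ n →
      ‖∑ i ∈ Finset.range m, a i • y i‖ ≤ K * ‖∑ i ∈ Finset.range n, a i • y i‖)
    (hweak : ∀ φ : X →L[ℂ] ℂ, Tendsto (fun n => φ (y n)) atTop (𝓝 0)) :
    ∃ ψ : ℕ → ℕ, StrictMono ψ ∧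
      ∃ g : ℕ → StrongDual ℂ X,
        (∃ c : ℝ, ∀ k, ‖g k‖ ≤ c) ∧
        (∀ k j, g k (y (ψ j)) = if k = j then 1 else 0) ∧
        (∀ Φ : StrongDual ℂ (StrongDual ℂ X),
          Tendsto (fun k => Φ (g k)) atTop (𝓝 0)) := by
  classical
  obtain ⟨K, hK1, hKb⟩ := hbasic
  obtain ⟨F, hFb, hFbi⟩ := exists_biorthogonal y hnorm K hK1 hKb
  obtain ⟨d, hdsm, hdconv⟩ := exists_weak_cauchy_subseq p T hp hT htype F (2 * K) hFb
  refine ⟨fun j => d (2 * j + 1), fun a b hab => hdsm (by omega),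
    fun k => F (d (2 * k + 1)) - F (d (2 * k)), ⟨4 * K, ?_⟩, ?_, ?_⟩
  · intro k
    calc ‖F (d (2 * k + 1)) - F (d (2 * k))‖
        ≤ ‖F (d (2 * k + 1))‖ + ‖F (d (2 * k))‖ := norm_sub_le _ _
      _ ≤ 2 * K + 2 * K := add_le_add (hFb _) (hFb _)
      _ = 4 * K := by ring
  · intro k j
    rw [ContinuousLinearMap.sub_apply, hFbi (d (2 * k + 1)) (d (2 * j + 1)),
      hFbi (d (2 * k)) (d (2 * j + 1))]
    have hne : d (2 * k) ≠ d (2 * j + 1) := by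
      intro h
      have := hdsm.injective h
      omega
    rw [if_neg hne, sub_zero]
    by_cases h : k = j
    · subst h
      rw [if_pos rfl, if_pos rfl]
    · have hne2 : d (2 * k + 1) ≠ d (2 * j + 1) := by
        intro hh
        have := hdsm.injective hh
        omega
      rw [if_neg hne2, if_neg h]
  · intro Φ
    obtain ⟨L, hL⟩ := hdconv Φ
    have h1 : Tendsto (fun k => Φ (F (d (2 * k + 1)))) atTop (𝓝 L) :=
      hL.comp (tendsto_atTop_atTop.mpr fun b => ⟨b, fun a ha => by omega⟩)
    have h2 : Tendsto (fun k => Φ (F (d (2 * k)))) atTop (𝓝 L) :=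
      hL.comp (tendsto_atTop_atTop.mpr fun b => ⟨b, fun a ha => by omega⟩)
    have h3 := h1.sub h2
    rw [sub_self] at h3
    have heq : (fun k => Φ (F (d (2 * k + 1)) - F (d (2 * k)))) =
        fun k => Φ (F (d (2 * k + 1))) - Φ (F (d (2 * k))) := by
      funext k
      exact map_sub Φ _ _
    rw [heq]
    exact h3
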